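/- Let $G$ be a group that is nilpotent of class at most 2, and suppose every element of the derived subgroup $G'$ has odd order (equivalently, every element of $G'$ has a unique square root). Define $h_1 + h_2 = h_1 h_2 [h_2,h_1]^{1/2}$, where $[h_2,h_1] = h_2^{-1}h_1^{-1}h_2h_1$ and $z^{1/2}$ denotes the unique square root of $z$ in $G'$. Then $(G,+)$ is an abelian group. -/

import Mathlib

open scoped commutatorElement

/-- The addition `h₁ + h₂ = h₁h₂[h₂,h₁]^{1/2}`, where `r` is a square-root function
on the derived subgroup. -/
def braceAdd {G : Type*} [Group G] (r : G → G) (a b : G) : G := a * b * r ⁅b, a⁆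

/-- If `G` is nilpotent of class at most 2 and every element of `G' = [G,G]` has odd order
(so that `r` picks the unique square root in `G'`), then `(G, +)` with
`h₁ + h₂ = h₁h₂[h₂,h₁]^{1/2}` is an abelian group (with neutral element `1`). -/
theorem stmt0 {G : Type*} [Group G]
    (hclass : ∀ a b c : G, ⁅⁅a, b⁆, c⁆ = 1)
    (hodd : ∀ g ∈ commutator G, Odd (orderOf g))
    (r : G → G)
    (hr : ∀ g ∈ commutator G, r g ∈ commutator G ∧ r g * r g = g) :
    (∀ a b : G, braceAdd r a b = braceAdd r b a) ∧
    (∀ a b c : G, braceAdd r (braceAdd r a b) c = braceAdd r a (braceAdd r b c)) ∧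
    (∀ a : G, braceAdd r a 1 = a) ∧
    (∀ a : G, ∃ b : G, braceAdd r a b = 1) := by
  -- membership of commutators
  have hmem : ∀ a b : G, ⁅a, b⁆ ∈ commutator G := fun a b =>
    (commutator_def G) ▸
      Subgroup.commutator_mem_commutator (Subgroup.mem_top a) (Subgroup.mem_top b)
  -- the commutator subgroup is central
  have hcent : ∀ g ∈ commutator G, ∀ x : G, g * x = x * g := by
    have hle : commutator G ≤ Subgroup.center G := by
      rw [commutator_def, Subgroup.commutator_le]
      intro p _ q _
      rw [Subgroup.mem_center_iff]
      intro y
      exact (commutatorElement_eq_one_iff_mul_comm.mp (hclass p q y)).symm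
    intro g hg x
    exact ((Subgroup.mem_center_iff.mp (hle hg)) x).symm
  -- squaring is injective on the commutator subgroup
  have hsq : ∀ x ∈ commutator G, ∀ y ∈ commutator G, x * x = y * y → x = y := by
    intro x hx y hy h
    have hz : x * y⁻¹ ∈ commutator G := mul_mem hx (inv_mem hy)
    have hone : x * y⁻¹ * (x * y⁻¹) = 1 := by
      calc x * y⁻¹ * (x * y⁻¹) = x * (y⁻¹ * x) * y⁻¹ := by group
        _ = x * (x * y⁻¹) * y⁻¹ := by rw [← hcent x hx y⁻¹]
        _ = (x * x) * (y * y)⁻¹ := by group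
        _ = 1 := by rw [h]; group
    have hdvd : orderOf (x * y⁻¹) ∣ 2 := orderOf_dvd_of_pow_eq_one (by rw [pow_two]; exact hone)
    have ho := hodd _ hz
    have h1 : orderOf (x * y⁻¹) = 1 := by
      rcases (Nat.dvd_prime Nat.prime_two).mp hdvd with h1 | h2
      · exact h1
      · rw [h2] at ho; exact absurd ho (by decide)
    exact mul_inv_eq_one.mp (orderOf_eq_one_iff.mp h1)
  -- r of 1, r of a product
  have hr1 : r 1 = 1 := by
    refine hsq _ (hr 1 (one_mem _)).1 1 (one_mem _) ?_
    rw [(hr 1 (one_mem _)).2, one_mul]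
  have hrmul : ∀ g ∈ commutator G, ∀ h ∈ commutator G, r (g * h) = r g * r h := by
    intro g hg h hh
    refine hsq _ (hr _ (mul_mem hg hh)).1 _ (mul_mem (hr g hg).1 (hr h hh).1) ?_
    rw [(hr _ (mul_mem hg hh)).2]
    calc g * h = (r g * r g) * (r h * r h) := by rw [(hr g hg).2, (hr h hh).2]
      _ = r g * (r g * r h) * r h := by group
      _ = r g * (r h * r g) * r h := by rw [hcent (r g) (hr g hg).1 (r h)]
      _ = r g * r h * (r g * r h) := by group
  -- a central factor can be dropped from a commutator
  have hc1 : ∀ c x z : G, (∀ t, z * t = t * z) → ⁅c, x * z⁆ = ⁅c, x⁆ := by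
    intro c x z hz
    calc ⁅c, x * z⁆ = c * x * (z * c⁻¹) * (z⁻¹ * x⁻¹) := by
          simp only [commutatorElement_def]; group
      _ = c * x * (c⁻¹ * z) * (z⁻¹ * x⁻¹) := by rw [hz c⁻¹]
      _ = ⁅c, x⁆ := by simp only [commutatorElement_def]; group
  have hc1' : ∀ c x z : G, (∀ t, z * t = t * z) → ⁅x * z, c⁆ = ⁅x, c⁆ := by
    intro c x z hz
    calc ⁅x * z, c⁆ = x * (z * c) * (z⁻¹ * x⁻¹ * c⁻¹) := by
          simp only [commutatorElement_def]; group
      _ = x * (c * z) * (z⁻¹ * x⁻¹ * c⁻¹) := by rw [hz c]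
      _ = ⁅x, c⁆ := by simp only [commutatorElement_def]; group
  -- bilinearity of commutators
  have hc2 : ∀ a b c : G, ⁅c, a * b⁆ = ⁅c, a⁆ * ⁅c, b⁆ := by
    intro a b c
    have hz := hcent ⁅c, b⁆ (hmem c b)
    have : ⁅c, a⁆ * ⁅c, b⁆ = ⁅c, a * b⁆ := by
      calc ⁅c, a⁆ * ⁅c, b⁆ = c * a * c⁻¹ * (a⁻¹ * ⁅c, b⁆) := by group
        _ = c * a * c⁻¹ * (⁅c, b⁆ * a⁻¹) := by rw [← hz a⁻¹]
        _ = ⁅c, a * b⁆ := by simp only [commutatorElement_def]; group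
    exact this.symm
  have hc2' : ∀ a b c : G, ⁅b * c, a⁆ = ⁅c, a⁆ * ⁅b, a⁆ := by
    intro a b c
    have hz := hcent ⁅c, a⁆ (hmem c a)
    calc ⁅b * c, a⁆ = b * (⁅c, a⁆ * (a * b⁻¹ * a⁻¹)) := by
          simp only [commutatorElement_def]; group
      _ = b * ((a * b⁻¹ * a⁻¹) * ⁅c, a⁆) := by rw [hz (a * b⁻¹ * a⁻¹)]
      _ = (b * (a * b⁻¹ * a⁻¹)) * ⁅c, a⁆ := by group
      _ = ⁅c, a⁆ * (b * (a * b⁻¹ * a⁻¹)) := by rw [← hz (b * (a * b⁻¹ * a⁻¹))]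
      _ = ⁅c, a⁆ * ⁅b, a⁆ := by simp only [commutatorElement_def]; group
  refine ⟨?_, ?_, ?_, ?_⟩
  · -- commutativity
    intro a b
    have hX := hcent ⁅b, a⁆ (hmem b a)
    have key : r ⁅b, a⁆ = ⁅b, a⁆ * r ⁅a, b⁆ := by
      refine hsq _ (hr _ (hmem b a)).1 _ (mul_mem (hmem b a) (hr _ (hmem a b)).1) ?_
      rw [(hr _ (hmem b a)).2]
      calc ⁅b, a⁆ = ⁅b, a⁆ * ⁅b, a⁆ * ⁅a, b⁆ := by simp only [commutatorElement_def]; group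
        _ = ⁅b, a⁆ * ⁅b, a⁆ * (r ⁅a, b⁆ * r ⁅a, b⁆) := by rw [(hr _ (hmem a b)).2]
        _ = ⁅b, a⁆ * (⁅b, a⁆ * r ⁅a, b⁆) * r ⁅a, b⁆ := by group
        _ = ⁅b, a⁆ * (r ⁅a, b⁆ * ⁅b, a⁆) * r ⁅a, b⁆ := by
              rw [hX (r ⁅a, b⁆)]
        _ = ⁅b, a⁆ * r ⁅a, b⁆ * (⁅b, a⁆ * r ⁅a, b⁆) := by group
    show a * b * r ⁅b, a⁆ = b * a * r ⁅a, b⁆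
    calc a * b * r ⁅b, a⁆ = a * b * (⁅b, a⁆ * r ⁅a, b⁆) := by rw [key]
      _ = a * (b * ⁅b, a⁆) * r ⁅a, b⁆ := by group
      _ = a * (⁅b, a⁆ * b) * r ⁅a, b⁆ := by rw [← hX b]
      _ = (a * ⁅b, a⁆) * b * r ⁅a, b⁆ := by group
      _ = (⁅b, a⁆ * a) * b * r ⁅a, b⁆ := by rw [← hX a]
      _ = b * a * r ⁅a, b⁆ := by simp only [commutatorElement_def]; group
  · -- associativity
    intro a b c
    have hp := hcent (r ⁅b, a⁆) (hr _ (hmem b a)).1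
    have hq := hcent (r ⁅c, a⁆) (hr _ (hmem c a)).1
    have hs := hcent (r ⁅c, b⁆) (hr _ (hmem c b)).1
    show a * b * r ⁅b, a⁆ * c * r ⁅c, a * b * r ⁅b, a⁆⁆
        = a * (b * c * r ⁅c, b⁆) * r ⁅b * c * r ⁅c, b⁆, a⁆
    rw [hc1 c (a * b) (r ⁅b, a⁆) hp, hc1' a (b * c) (r ⁅c, b⁆) hs,
      hc2 a b c, hc2' a b c,
      hrmul _ (hmem c a) _ (hmem c b), hrmul _ (hmem c a) _ (hmem b a)]
    calc a * b * r ⁅b, a⁆ * c * (r ⁅c, a⁆ * r ⁅c, b⁆)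
        = a * b * (r ⁅b, a⁆ * c) * (r ⁅c, a⁆ * r ⁅c, b⁆) := by group
      _ = a * b * (c * r ⁅b, a⁆) * (r ⁅c, a⁆ * r ⁅c, b⁆) := by rw [hp c]
      _ = a * (b * c) * (r ⁅b, a⁆ * r ⁅c, a⁆ * r ⁅c, b⁆) := by group
      _ = a * (b * c) * (r ⁅c, a⁆ * r ⁅b, a⁆ * r ⁅c, b⁆) := by rw [hp (r ⁅c, a⁆)]
      _ = a * (b * c) * (r ⁅c, b⁆ * (r ⁅c, a⁆ * r ⁅b, a⁆)) := by
            rw [(hs (r ⁅c, a⁆ * r ⁅b, a⁆)).symm]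
      _ = a * (b * c * r ⁅c, b⁆) * (r ⁅c, a⁆ * r ⁅b, a⁆) := by group
  · -- identity
    intro a
    show a * 1 * r ⁅(1 : G), a⁆ = a
    simp [hr1]
  · -- inverses
    intro a
    refine ⟨a⁻¹, ?_⟩
    show a * a⁻¹ * r ⁅a⁻¹, a⁆ = 1
    have h1 : ⁅a⁻¹, a⁆ = (1 : G) := commutatorElement_eq_one_iff_mul_comm.mpr (by group)
    simp [h1, hr1]
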